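/- Suppose |D| < 1 and |A - D| < 2, and let α̂ = -D^2 + AD - B + 1. If additionally α̂ > max{-P_0(1), P_0(-1)}, then the polynomial P_{α̂}(λ) = λ^3 + Aλ^2 + (B+α̂)λ + D has the real root -D together with two complex conjugate nonreal roots lying on the unit circle (and different from ±1). -/

import Mathlib

/-- At the right endpoint `α̂ = -D² + AD - B + 1` of the stability interval, the cubic
`P_α̂` has the real root `-D` together with a pair of nonreal complex conjugate roots on
the unit circle, different from `±1`. -/
theorem endpoint_roots (A B D : ℝ) (hD : |D| < 1) (hAD : |A - D| < 2)
    (hgt : max (-(1 + A + B + D)) (-1 + A - B + D) < -D ^ 2 + A * D - B + 1) :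
    letI α : ℝ := -D ^ 2 + A * D - B + 1
    ((-D : ℂ) ^ 3 + (A : ℂ) * (-D : ℂ) ^ 2 + ((B : ℂ) + (α : ℂ)) * (-D : ℂ) + (D : ℂ) = 0) ∧
    ∃ z : ℂ, z.im ≠ 0 ∧ ‖z‖ = 1 ∧ z ≠ 1 ∧ z ≠ -1 ∧
      (z ^ 3 + (A : ℂ) * z ^ 2 + ((B : ℂ) + (α : ℂ)) * z + (D : ℂ) = 0) ∧
      ((starRingEnd ℂ z) ^ 3 + (A : ℂ) * (starRingEnd ℂ z) ^ 2
        + ((B : ℂ) + (α : ℂ)) * (starRingEnd ℂ z) + (D : ℂ) = 0) := by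
  set α : ℝ := -D ^ 2 + A * D - B + 1 with hα
  set a : ℝ := A - D with ha_def
  have hpos : 0 < 4 - a ^ 2 := by
    have h1 := (abs_lt.mp hAD).1
    have h2 := (abs_lt.mp hAD).2
    nlinarith
  set s : ℝ := Real.sqrt (4 - a ^ 2) / 2 with hs_def
  have hs_pos : 0 < s := div_pos (Real.sqrt_pos.mpr hpos) two_pos
  have hs_sq : s ^ 2 = (4 - a ^ 2) / 4 := by
    rw [hs_def, div_pow, Real.sq_sqrt hpos.le]; norm_num
  set z : ℂ := (↑(-a / 2) : ℂ) + (s : ℂ) * Complex.I with hz_def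
  have hzim : z.im = s := by simp [hz_def]
  have hI : (Complex.I) ^ 2 = -1 := Complex.I_sq
  have hc2 : (s : ℂ) ^ 2 = (4 - (a : ℂ) ^ 2) / 4 := by
    exact_mod_cast congrArg (fun x : ℝ => (x : ℂ)) hs_sq
  have hquad : z ^ 2 + (a : ℂ) * z + 1 = 0 := by
    rw [hz_def]; push_cast
    linear_combination (s : ℂ) ^ 2 * hI - hc2
  have hquad' : (starRingEnd ℂ z) ^ 2 + (a : ℂ) * (starRingEnd ℂ z) + 1 = 0 := by
    have h := congrArg (starRingEnd ℂ) hquad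
    simpa [map_add, map_mul, map_pow, Complex.conj_ofReal] using h
  have hαc : (α : ℂ) = -(D : ℂ) ^ 2 + (A : ℂ) * (D : ℂ) - (B : ℂ) + 1 := by
    rw [hα]; push_cast; ring
  have hac : (a : ℂ) = (A : ℂ) - (D : ℂ) := by rw [ha_def]; push_cast; ring
  refine ⟨by rw [hαc]; ring, z, ?_, ?_, ?_, ?_, ?_, ?_⟩
  · rw [hzim]; exact ne_of_gt hs_pos
  · have hnorm : Complex.normSq z = 1 := by
      have hre : z.re = -a / 2 := by simp [hz_def]
      rw [Complex.normSq_apply, hre, hzim]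
      nlinarith [hs_sq]
    rw [Complex.norm_def, hnorm, Real.sqrt_one]
  · intro h
    have := congrArg Complex.im h
    rw [hzim] at this
    simp at this
    exact hs_pos.ne' this
  · intro h
    have := congrArg Complex.im h
    rw [hzim] at this
    simp at this
    exact hs_pos.ne' this
  · rw [hαc]
    linear_combination (z + (D : ℂ)) * hquad - (z ^ 2 + (D : ℂ) * z) * hac
  · rw [hαc]
    linear_combination ((starRingEnd ℂ z) + (D : ℂ)) * hquad'
      - ((starRingEnd ℂ z) ^ 2 + (D : ℂ) * (starRingEnd ℂ z)) * hac
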